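/- Fix constants τ_d > τ_1 > 0 and λ > 0, and let Z be a nonnegative random variable. With W(γ) = E[max{ (τ_d − τ_1)·max{log₂(1+γ), (1/2)log₂(1+γ+Z)} − λτ_d, −λτ_1 }], the function γ ↦ τ_d(log₂(1+γ) − λ) − W(γ) is monotone nondecreasing on γ ≥ 0 and tends to +∞ as γ → ∞. -/
import Mathlib

open MeasureTheory

lemma logb_diff_le (γ₁ γ₂ z : ℝ) (h1 : 0 ≤ γ₁) (h12 : γ₁ ≤ γ₂) (hz : 0 ≤ z) :
    Real.logb 2 (1 + γ₂ + z) - Real.logb 2 (1 + γ₁ + z)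
      ≤ Real.logb 2 (1 + γ₂) - Real.logb 2 (1 + γ₁) := by
  have p1 : (0:ℝ) < 1 + γ₁ := by linarith
  have p2 : (0:ℝ) < 1 + γ₂ := by linarith
  have p3 : (0:ℝ) < 1 + γ₁ + z := by linarith
  have p4 : (0:ℝ) < 1 + γ₂ + z := by linarith
  have hlog2 : (0:ℝ) < Real.log 2 := Real.log_pos (by norm_num)
  have hlog : Real.log ((1 + γ₂ + z) * (1 + γ₁)) ≤ Real.log ((1 + γ₁ + z) * (1 + γ₂)) := by
    apply Real.log_le_log (by positivity)
    nlinarith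
  rw [Real.log_mul (by positivity) (by positivity),
      Real.log_mul (by positivity) (by positivity)] at hlog
  simp only [Real.logb]
  rw [div_sub_div_same, div_sub_div_same, div_le_div_iff_of_pos_right hlog2]
  linarith

/-- With `τ_d > τ_1 > 0`, `λ > 0`, `Z` a nonnegative random variable and
`W(γ) = E[max{(τ_d − τ_1)·max{log₂(1+γ), (1/2)log₂(1+γ+Z)} − λτ_d, −λτ_1}]`,
the function `γ ↦ τ_d(log₂(1+γ) − λ) − W(γ)` is monotone nondecreasing on
`γ ≥ 0` and tends to `+∞` as `γ → ∞`. -/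
theorem direct_minus_W_monotone_tendsto {Ω : Type*} [MeasurableSpace Ω]
    (μ : Measure Ω) [IsProbabilityMeasure μ] (Z : Ω → ℝ) (hZ : ∀ ω, 0 ≤ Z ω)
    (τd τ1 lam : ℝ) (hτ1 : 0 < τ1) (hτd : τ1 < τd) (hlam : 0 < lam)
    (W : ℝ → ℝ)
    (hW : ∀ γ : ℝ, W γ = ∫ ω,
        max ((τd - τ1) * max (Real.logb 2 (1 + γ))
              ((1 / 2) * Real.logb 2 (1 + γ + Z ω)) - lam * τd)
          (-(lam * τ1)) ∂μ)
    (hint : ∀ γ : ℝ, 0 ≤ γ → Integrable (fun ω =>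
        max ((τd - τ1) * max (Real.logb 2 (1 + γ))
              ((1 / 2) * Real.logb 2 (1 + γ + Z ω)) - lam * τd)
          (-(lam * τ1))) μ) :
    (∀ γ₁ γ₂ : ℝ, 0 ≤ γ₁ → γ₁ ≤ γ₂ →
        τd * (Real.logb 2 (1 + γ₁) - lam) - W γ₁
          ≤ τd * (Real.logb 2 (1 + γ₂) - lam) - W γ₂)
    ∧ Filter.Tendsto (fun γ : ℝ => τd * (Real.logb 2 (1 + γ) - lam) - W γ)
        Filter.atTop Filter.atTop := by
  -- Key step: the gain inequality f γ₁ + τ1 * Δ ≤ f γ₂.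
  have key : ∀ γ₁ γ₂ : ℝ, 0 ≤ γ₁ → γ₁ ≤ γ₂ →
      τd * (Real.logb 2 (1 + γ₁) - lam) - W γ₁
        + τ1 * (Real.logb 2 (1 + γ₂) - Real.logb 2 (1 + γ₁))
        ≤ τd * (Real.logb 2 (1 + γ₂) - lam) - W γ₂ := by
    intro γ₁ γ₂ h1 h12
    have h2 : (0:ℝ) ≤ γ₂ := le_trans h1 h12
    set Δ : ℝ := Real.logb 2 (1 + γ₂) - Real.logb 2 (1 + γ₁) with hΔ
    have hΔ0 : 0 ≤ Δ := by
      have := Real.logb_le_logb_of_le (b := 2) (by norm_num) (by linarith : (0:ℝ) < 1 + γ₁) (by linarith : (1:ℝ) + γ₁ ≤ 1 + γ₂)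
      linarith
    -- pointwise estimate
    have hpt : ∀ ω,
        max ((τd - τ1) * max (Real.logb 2 (1 + γ₂))
              ((1 / 2) * Real.logb 2 (1 + γ₂ + Z ω)) - lam * τd) (-(lam * τ1))
        ≤ max ((τd - τ1) * max (Real.logb 2 (1 + γ₁))
              ((1 / 2) * Real.logb 2 (1 + γ₁ + Z ω)) - lam * τd) (-(lam * τ1))
            + (τd - τ1) * Δ := by
      intro ω
      have hc : 0 ≤ τd - τ1 := by linarith
      have hvu := logb_diff_le γ₁ γ₂ (Z ω) h1 h12 (hZ ω)
      set a := Real.logb 2 (1 + γ₁)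
      set b := Real.logb 2 (1 + γ₂)
      set u := Real.logb 2 (1 + γ₁ + Z ω)
      set v := Real.logb 2 (1 + γ₂ + Z ω)
      have hM : max b ((1/2) * v) ≤ max a ((1/2) * u) + Δ := by
        apply max_le
        · have : a ≤ max a ((1/2) * u) := le_max_left _ _
          simp only [hΔ]; linarith
        · have h1' : (1/2) * u ≤ max a ((1/2) * u) := le_max_right _ _
          simp only [hΔ] at hvu ⊢
          linarith
      apply max_le
      · have := mul_le_mul_of_nonneg_left hM hc
        have hmax : max ((τd - τ1) * max a ((1/2) * u) - lam * τd) (-(lam * τ1))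
            ≥ (τd - τ1) * max a ((1/2) * u) - lam * τd := le_max_left _ _
        nlinarith
      · have hmax : max ((τd - τ1) * max a ((1/2) * u) - lam * τd) (-(lam * τ1))
            ≥ -(lam * τ1) := le_max_right _ _
        nlinarith [mul_nonneg hc hΔ0]
    -- integrate
    have hWle : W γ₂ ≤ W γ₁ + (τd - τ1) * Δ := by
      rw [hW γ₁, hW γ₂]
      calc ∫ ω, max ((τd - τ1) * max (Real.logb 2 (1 + γ₂))
              ((1 / 2) * Real.logb 2 (1 + γ₂ + Z ω)) - lam * τd) (-(lam * τ1)) ∂μ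
          ≤ ∫ ω, (max ((τd - τ1) * max (Real.logb 2 (1 + γ₁))
              ((1 / 2) * Real.logb 2 (1 + γ₁ + Z ω)) - lam * τd) (-(lam * τ1))
              + (τd - τ1) * Δ) ∂μ := by
            exact integral_mono (hint γ₂ h2) ((hint γ₁ h1).add (integrable_const _)) hpt
        _ = (∫ ω, max ((τd - τ1) * max (Real.logb 2 (1 + γ₁))
              ((1 / 2) * Real.logb 2 (1 + γ₁ + Z ω)) - lam * τd) (-(lam * τ1)) ∂μ)
              + (τd - τ1) * Δ := by
            rw [integral_add (hint γ₁ h1) (integrable_const _), integral_const]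
            simp
    simp only [hΔ] at hWle ⊢
    nlinarith
  constructor
  · intro γ₁ γ₂ h1 h12
    have hΔ0 : 0 ≤ Real.logb 2 (1 + γ₂) - Real.logb 2 (1 + γ₁) := by
      have := Real.logb_le_logb_of_le (b := 2) (by norm_num) (by linarith : (0:ℝ) < 1 + γ₁) (by linarith : (1:ℝ) + γ₁ ≤ 1 + γ₂)
      linarith
    nlinarith [key γ₁ γ₂ h1 h12]
  · -- divergence: f γ ≥ f 0 + τ1 * logb 2 (1+γ) for γ ≥ 0
    have hbound : ∀ γ : ℝ, 0 ≤ γ →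
        τd * (Real.logb 2 (1 + 0) - lam) - W 0 + τ1 * Real.logb 2 (1 + γ)
          ≤ τd * (Real.logb 2 (1 + γ) - lam) - W γ := by
      intro γ hγ
      have := key 0 γ le_rfl hγ
      simp only [Real.logb, add_zero, Real.log_one, zero_div] at this ⊢
      linarith
    have hlog : Filter.Tendsto (fun γ : ℝ =>
        τd * (Real.logb 2 (1 + 0) - lam) - W 0 + τ1 * Real.logb 2 (1 + γ))
        Filter.atTop Filter.atTop := by
      apply Filter.tendsto_atTop_add_const_left
      apply Filter.Tendsto.const_mul_atTop hτ1
      exact (Real.tendsto_logb_atTop (by norm_num)).comp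
        (Filter.tendsto_atTop_add_const_left _ 1 Filter.tendsto_id)
    apply Filter.tendsto_atTop_mono' _ _ hlog
    filter_upwards [Filter.eventually_ge_atTop (0:ℝ)] with γ hγ
    exact hbound γ hγ
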